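/- With B as constructed (B = ⋃_{t≥1} ({ n : d_t ∣ n } ∩ [2^{2^{t^2}}, 2^{2^{(t+1)^2}}))), the set A = ℕ of all positive integers and B satisfy: there exists c > 0 such that A(log x / log 2) · B(x) > c x log x / exp(3 sqrt(log log x) log log log x) > x for all sufficiently large x, where A(y) and B(y) denote the number of elements of A and B respectively that are ≤ y. -/

import Mathlib

set_option maxRecDepth 8000
set_option maxHeartbeats 16000000

open Real Filter

/-- The `i`-th odd prime (1-indexed): `oddPrime 1 = 3`, `oddPrime 2 = 5`, ... -/
noncomputable def oddPrime (i : ℕ) : ℕ := Nat.nth (fun p => p.Prime ∧ Odd p) (i - 1)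

/-- `dProd j` is the product of the first `j` odd primes. -/
noncomputable def dProd (j : ℕ) : ℕ := ∏ i ∈ Finset.Icc 1 j, oddPrime i

/-- `Bt t = { n : dProd t ∣ n } ∩ [2^(2^(t^2)), 2^(2^((t+1)^2)))`. -/
noncomputable def Bt (t : ℕ) : Set ℕ :=
  {n | dProd t ∣ n ∧ 2 ^ 2 ^ t ^ 2 ≤ n ∧ n < 2 ^ 2 ^ (t + 1) ^ 2}

/-- `Bset = ⋃_{t ≥ 1} Bt t`. -/
noncomputable def Bset : Set ℕ := ⋃ t ≥ 1, Bt t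

/-- Counting function of a set of naturals: number of elements `≤ x`. -/
noncomputable def countOf (S : Set ℕ) (x : ℝ) : ℕ := Nat.card {n : ℕ | n ∈ S ∧ (n : ℝ) ≤ x}

/-- `Aset` is the set of all positive integers. -/
def Aset : Set ℕ := {n | 1 ≤ n}

lemma oddp_infinite : {p : ℕ | p.Prime ∧ Odd p}.Infinite := by
  have h : {p : ℕ | p.Prime} \ {2} ⊆ {p : ℕ | p.Prime ∧ Odd p} := by
    rintro p ⟨hp, h2⟩
    exact ⟨hp, hp.odd_of_ne_two (by simpa using h2)⟩
  exact ((Nat.infinite_setOf_prime).diff (Set.finite_singleton 2)).mono h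

example : Nat.count Nat.Prime 3 = 1 := by decide

lemma nth_oddPrime (k : ℕ) :
    Nat.nth (fun p => p.Prime ∧ Odd p) k = Nat.nth Nat.Prime (k + 1) := by
  classical
  set m := Nat.nth Nat.Prime (k + 1) with hm
  have hmp : m.Prime := Nat.nth_mem_of_infinite Nat.infinite_setOf_prime (k + 1)
  have hcount : Nat.count Nat.Prime m = k + 1 :=
    Nat.count_nth_of_infinite Nat.infinite_setOf_prime (k + 1)
  have hm2 : m ≠ 2 := by
    intro h
    rw [h] at hcount
    simp [Nat.count_succ, Nat.not_prime_zero, Nat.not_prime_one] at hcount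
  have hmodd : Odd m := hmp.odd_of_ne_two hm2
  have h2m : 2 < m := lt_of_le_of_ne hmp.two_le (Ne.symm hm2)
  have hfe : (Finset.range m).filter (fun p => p.Prime ∧ Odd p)
      = ((Finset.range m).filter Nat.Prime).erase 2 := by
    rw [← Finset.filter_ne']
    rw [Finset.filter_filter]
    apply Finset.filter_congr
    intro p _
    constructor
    · rintro ⟨hp, hodd⟩
      exact ⟨hp, by rintro rfl; exact (Nat.not_odd_iff_even.mpr (by decide)) hodd⟩
    · rintro ⟨hp, hne⟩
      exact ⟨hp, hp.odd_of_ne_two hne⟩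
  have hcard : Nat.count (fun p => p.Prime ∧ Odd p) m = k := by
    rw [Nat.count_eq_card_filter_range, hfe, Finset.card_erase_of_mem]
    · rw [← Nat.count_eq_card_filter_range, hcount]; rfl
    · simp [Finset.mem_filter, Finset.mem_range, h2m, Nat.prime_two]
  have := Nat.nth_count (p := fun p => p.Prime ∧ Odd p) (n := m) ⟨hmp, hmodd⟩
  rw [hcard] at this
  exact this

lemma centralBinom_le_pow (n : ℕ) :
    Nat.centralBinom n ≤ (2 * n) ^ (Nat.count Nat.Prime (2 * n + 1)) := by
  classical
  have h0 : Nat.centralBinom n ≠ 0 := (Nat.centralBinom_pos n).ne'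
  have hsub : (Nat.centralBinom n).primeFactors ⊆
      (Finset.range (2 * n + 1)).filter Nat.Prime := by
    intro p hp
    have hprime : p.Prime := Nat.prime_of_mem_primeFactors hp
    have hν : (Nat.centralBinom n).factorization p ≠ 0 := by
      rwa [← Finsupp.mem_support_iff, Nat.support_factorization]
    rcases Nat.eq_zero_or_pos n with rfl | hn
    · simp [Nat.centralBinom] at hp
    have hle : p ^ (Nat.centralBinom n).factorization p ≤ 2 * n := by
      have := Nat.pow_factorization_choose_le (p := p) (n := 2 * n) (k := n)
        (by omega)
      simpa [Nat.centralBinom] using this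
    have : p ≤ p ^ (Nat.centralBinom n).factorization p := Nat.le_self_pow hν p
    simp only [Finset.mem_filter, Finset.mem_range]
    exact ⟨by omega, hprime⟩
  calc Nat.centralBinom n
      = (Nat.centralBinom n).factorization.prod (· ^ ·) :=
        (Nat.factorization_prod_pow_eq_self h0).symm
    _ ≤ ∏ _p ∈ (Nat.centralBinom n).primeFactors, 2 * n := by
        rw [Finsupp.prod]
        apply Finset.prod_le_prod'
        intro p hp
        rcases Nat.eq_zero_or_pos n with rfl | hn
        · simp [Nat.centralBinom] at hp
        have := Nat.pow_factorization_choose_le (p := p) (n := 2 * n) (k := n)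
          (by omega)
        simpa [Nat.support_factorization, Nat.centralBinom] using this
    _ = (2 * n) ^ (Nat.centralBinom n).primeFactors.card := Finset.prod_const _
    _ ≤ (2 * n) ^ (Nat.count Nat.Prime (2 * n + 1)) := by
        rcases Nat.eq_zero_or_pos n with rfl | hn
        · norm_num [Nat.centralBinom, Nat.count_succ, Nat.count_zero, Nat.not_prime_zero]
        apply Nat.pow_le_pow_right (by omega)
        rw [Nat.count_eq_card_filter_range]
        exact Finset.card_le_card hsub

lemma pi_lower (n : ℕ) (hn : 0 < n) :
    (n : ℝ) * Real.log 4 ≤ (Nat.count Nat.Prime (2 * n + 1) + 1) * Real.log (2 * n) := by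
  have h1 : (4 : ℕ) ^ n ≤ (2 * n) ^ (Nat.count Nat.Prime (2 * n + 1) + 1) := by
    calc (4:ℕ) ^ n ≤ 2 * n * Nat.centralBinom n :=
          Nat.four_pow_le_two_mul_self_mul_centralBinom n hn
      _ ≤ 2 * n * (2 * n) ^ (Nat.count Nat.Prime (2 * n + 1)) := by
          exact Nat.mul_le_mul_left _ (centralBinom_le_pow n)
      _ = (2 * n) ^ (Nat.count Nat.Prime (2 * n + 1) + 1) := by ring
  have h2 : ((4:ℝ)) ^ n ≤ ((2 * n : ℕ) : ℝ) ^ (Nat.count Nat.Prime (2 * n + 1) + 1) := by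
    exact_mod_cast h1
  have h3 := Real.log_le_log (by positivity) h2
  rw [Real.log_pow, Real.log_pow] at h3
  push_cast at h3 ⊢
  convert h3 using 2 <;> ring

lemma log_le_two_sqrt {y : ℝ} (hy : 1 ≤ y) : Real.log y ≤ 2 * Real.sqrt y := by
  have hs : (0:ℝ) < Real.sqrt y := Real.sqrt_pos.2 (by linarith)
  have h1 : Real.log (Real.sqrt y) ≤ Real.sqrt y - 1 := Real.log_le_sub_one_of_pos hs
  have h2 : Real.log y = 2 * Real.log (Real.sqrt y) := by
    rw [Real.log_sqrt (by linarith)]; ring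
  nlinarith [Real.sqrt_nonneg y]

lemma nth_prime_le {j : ℕ} (hj : 100 ≤ j) : Nat.nth Nat.Prime j ≤ 2 * j ^ 2 := by
  have hjR : (100 : ℝ) ≤ (j : ℝ) := by exact_mod_cast hj
  have hjpos : (0:ℝ) < (j:ℝ) := by linarith
  have hpi := pi_lower (j ^ 2) (by positivity)
  set pc := Nat.count Nat.Prime (2 * j ^ 2 + 1) with hpc
  -- bounds on log (2 j^2)
  have hsqrtj : (10:ℝ) ≤ Real.sqrt j := by
    rw [show (10:ℝ) = Real.sqrt 100 by rw [show (100:ℝ) = 10^2 by norm_num, Real.sqrt_sq]; norm_num]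
    exact Real.sqrt_le_sqrt hjR
  have hsq : Real.sqrt j * Real.sqrt j = (j:ℝ) := Real.mul_self_sqrt hjpos.le
  have hlogj : Real.log j ≤ 2 * Real.sqrt j := log_le_two_sqrt (by linarith)
  have hlog2 : Real.log 2 ≤ 1 := by
    have := Real.log_le_sub_one_of_pos (by norm_num : (0:ℝ) < 2); linarith
  have hL : Real.log (2 * (j:ℝ)^2) ≤ 5 * Real.sqrt j := by
    rw [Real.log_mul (by norm_num) (by positivity), Real.log_pow]
    push_cast
    nlinarith
  have hLpos : (0:ℝ) < Real.log (2 * (j:ℝ)^2) := by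
    apply Real.log_pos; nlinarith
  have hlog4 : (1:ℝ) ≤ Real.log 4 := by
    rw [Real.le_log_iff_exp_le (by norm_num)]
    have := Real.exp_one_lt_d9; linarith
  -- (j+2) * L ≤ j^2 * log 4
  have key : ((j:ℝ) + 2) * Real.log (2 * (j:ℝ)^2) ≤ (j:ℝ)^2 * Real.log 4 := by
    have h1 : ((j:ℝ) + 2) * Real.log (2 * (j:ℝ)^2) ≤ 2 * j * (5 * Real.sqrt j) := by
      have : ((j:ℝ) + 2) ≤ 2 * j := by linarith
      nlinarith [hLpos.le, Real.sqrt_nonneg (j:ℝ)]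
    have h2 : 2 * (j:ℝ) * (5 * Real.sqrt j) ≤ (j:ℝ)^2 := by nlinarith
    nlinarith
  push_cast at hpi
  have hpcpc : ((j:ℝ) + 2) ≤ (pc : ℝ) + 1 := by
    by_contra hcon
    push_neg at hcon
    have : ((pc:ℝ) + 1) * Real.log (2 * (j:ℝ)^2) < ((j:ℝ)+2) * Real.log (2*(j:ℝ)^2) := by
      exact mul_lt_mul_of_pos_right hcon hLpos
    nlinarith
  have hjpc : j < pc := by
    have : (j:ℝ) + 1 ≤ (pc:ℝ) := by linarith
    exact_mod_cast by exact_mod_cast (by exact_mod_cast this : ((j+1:ℕ):ℝ) ≤ (pc:ℝ))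
  have := Nat.nth_lt_of_lt_count (p := Nat.Prime) hjpc
  omega

lemma oddPrime_prime (i : ℕ) : (oddPrime i).Prime :=
  (Nat.nth_mem_of_infinite oddp_infinite (i - 1)).1

lemma oddPrime_pos (i : ℕ) : 0 < oddPrime i := (oddPrime_prime i).pos

lemma dProd_pos (t : ℕ) : 0 < dProd t :=
  Finset.prod_pos fun i _ => oddPrime_pos i

lemma oddPrime_le {i : ℕ} (hi : 100 ≤ i) : oddPrime i ≤ 2 * i ^ 2 := by
  have h1 : oddPrime i = Nat.nth Nat.Prime i := by
    rw [oddPrime, nth_oddPrime]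
    congr 1
    omega
  rw [h1]
  exact nth_prime_le hi

lemma dProd_le_aux : ∀ t : ℕ, 100 ≤ t →
    (dProd t : ℝ) ≤ (dProd 100 : ℝ) * 2 ^ t * (t : ℝ) ^ (2 * t) := by
  intro t ht
  induction t with
  | zero => omega
  | succ t ih =>
    rcases Nat.lt_or_ge t 100 with h | h
    · have ht' : t + 1 = 100 := by omega
      have e : dProd (t+1) = dProd 100 := by rw [ht']
      rw [e]
      have hD : (0:ℝ) < (dProd 100 : ℝ) := by exact_mod_cast dProd_pos 100
      have o1 : (1:ℝ) ≤ 2 ^ (t+1) := one_le_pow₀ (by norm_num)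
      have o2 : (1:ℝ) ≤ (((t+1 : ℕ)):ℝ) ^ (2*(t+1)) :=
        one_le_pow₀ (by exact_mod_cast Nat.one_le_iff_ne_zero.2 (Nat.succ_ne_zero t))
      have o3 : (1:ℝ) ≤ 2 ^ (t+1) * (((t+1:ℕ)):ℝ) ^ (2*(t+1)) := by nlinarith
      calc (dProd 100 : ℝ) = (dProd 100 : ℝ) * 1 := by ring
        _ ≤ (dProd 100 : ℝ) * (2 ^ (t+1) * (((t+1:ℕ)):ℝ) ^ (2*(t+1))) :=
            mul_le_mul_of_nonneg_left o3 hD.le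
        _ = (dProd 100 : ℝ) * 2 ^ (t+1) * (((t+1:ℕ)):ℝ) ^ (2*(t+1)) := by ring
    · have ih' := ih h
      have hstep : dProd (t + 1) = dProd t * oddPrime (t + 1) := by
        rw [dProd, dProd, ← Finset.prod_Icc_succ_top (by omega : 1 ≤ t + 1)]
      have hop : (oddPrime (t+1) : ℝ) ≤ 2 * ((t:ℝ) + 1) ^ 2 := by
        have := oddPrime_le (by omega : 100 ≤ t + 1)
        have : ((oddPrime (t+1) : ℕ) : ℝ) ≤ ((2 * (t+1)^2 : ℕ) : ℝ) := by exact_mod_cast this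
        push_cast at this
        linarith
      have hd0 : (0:ℝ) ≤ (dProd t : ℝ) := by positivity
      have hmono : ((t:ℝ)) ^ (2*t) ≤ ((t:ℝ)+1) ^ (2*t) := by
        apply pow_le_pow_left₀ (by positivity)
        linarith
      have hD : (0:ℝ) < (dProd 100 : ℝ) := by exact_mod_cast dProd_pos 100
      calc (dProd (t+1) : ℝ) = (dProd t : ℝ) * (oddPrime (t+1) : ℝ) := by
            rw [hstep]; push_cast; ring
        _ ≤ ((dProd 100 : ℝ) * 2 ^ t * (t:ℝ) ^ (2*t)) * (2 * ((t:ℝ)+1)^2) := by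
            apply mul_le_mul ih' hop (by positivity)
            positivity
        _ ≤ ((dProd 100 : ℝ) * 2 ^ t * ((t:ℝ)+1) ^ (2*t)) * (2 * ((t:ℝ)+1)^2) := by
            apply mul_le_mul_of_nonneg_right _ (by positivity)
            gcongr
        _ = (dProd 100 : ℝ) * 2 ^ (t+1) * (((t+1) : ℕ) : ℝ) ^ (2*(t+1)) := by
            push_cast
            rw [show 2*(t+1) = 2*t + 2 by ring, pow_add, pow_succ]
            ring

lemma dProd_le_eventually : ∀ᶠ t : ℕ in atTop, (dProd t : ℝ) ≤ Real.exp (3 * t * Real.log t) := by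
  have hlog : Tendsto (fun t : ℕ => Real.log t) atTop atTop :=
    Real.tendsto_log_atTop.comp tendsto_natCast_atTop_atTop
  have h1 : ∀ᶠ t : ℕ in atTop, Real.log (dProd 100) + 1 ≤ Real.log t :=
    hlog.eventually_ge_atTop _
  have h2 : ∀ᶠ t : ℕ in atTop, (1:ℝ) ≤ (t:ℝ) :=
    tendsto_natCast_atTop_atTop.eventually_ge_atTop _
  filter_upwards [h1, h2, eventually_ge_atTop 100] with t hlt h1t h100
  have hbd := dProd_le_aux t h100
  have htR : (1:ℝ) ≤ (t:ℝ) := h1t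
  have hlogt : (0:ℝ) ≤ Real.log t := Real.log_nonneg htR
  have hD : (0:ℝ) < (dProd 100 : ℝ) := by exact_mod_cast dProd_pos 100
  -- log of RHS
  have hRHS : (dProd 100 : ℝ) * 2 ^ t * (t : ℝ) ^ (2 * t) ≤ Real.exp (3 * t * Real.log t) := by
    have hDp : (0:ℝ) < (dProd 100 : ℝ) := by exact_mod_cast dProd_pos 100
    have hp1 : (0:ℝ) < 2 ^ t := pow_pos (by norm_num) t
    have hp2 : (0:ℝ) < (t:ℝ) ^ (2*t) := pow_pos (by linarith) _
    rw [← Real.exp_log (x := (dProd 100 : ℝ) * 2 ^ t * (t : ℝ) ^ (2 * t))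
      (by exact mul_pos (mul_pos hDp hp1) hp2)]
    apply Real.exp_le_exp.2
    rw [Real.log_mul (by exact (mul_pos hDp hp1).ne') hp2.ne',
      Real.log_mul hDp.ne' hp1.ne', Real.log_pow, Real.log_pow]
    have hlog2 : Real.log 2 ≤ 1 := by
      have := Real.log_le_sub_one_of_pos (by norm_num : (0:ℝ) < 2); linarith
    have e1 : (t:ℝ) * Real.log 2 ≤ t := by
      nlinarith
    have e2 : Real.log (dProd 100 : ℝ) + 1 ≤ Real.log t := hlt
    have hDlog : (0:ℝ) ≤ Real.log (dProd 100 : ℝ) := by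
      apply Real.log_nonneg
      exact_mod_cast dProd_pos 100
    have e3 : (t:ℝ) * (Real.log (dProd 100 : ℝ) + 1) ≤ (t:ℝ) * Real.log t :=
      mul_le_mul_of_nonneg_left e2 (by linarith)
    have e4 : Real.log (dProd 100 : ℝ) ≤ (t:ℝ) * Real.log (dProd 100 : ℝ) :=
      le_mul_of_one_le_left hDlog htR
    push_cast
    nlinarith
  linarith

lemma countOf_ge (S : Set ℕ) (x : ℝ) (F : Finset ℕ)
    (h : ∀ n ∈ F, n ∈ S ∧ (n : ℝ) ≤ x) : F.card ≤ countOf S x := by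
  classical
  have hfin : {n : ℕ | n ∈ S ∧ (n : ℝ) ≤ x}.Finite := by
    apply (Set.finite_Iic ⌊x⌋₊).subset
    intro n hn
    exact Nat.le_floor hn.2
  have hsub : (F : Set ℕ) ⊆ {n : ℕ | n ∈ S ∧ (n : ℝ) ≤ x} := fun n hn => h n hn
  rw [countOf, Nat.card_coe_set_eq]
  calc F.card = (F : Set ℕ).ncard := (Set.ncard_coe_finset F).symm
    _ ≤ _ := Set.ncard_le_ncard hsub hfin

lemma card_dvd_Ioc (d a b : ℕ) (hab : a ≤ b) :
    ((Finset.Ioc a b).filter (d ∣ ·)).card = b / d - a / d := by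
  classical
  have hunion : Finset.Ioc 0 a ∪ Finset.Ioc a b = Finset.Ioc 0 b :=
    Finset.Ioc_union_Ioc_eq_Ioc (Nat.zero_le a) hab
  have hdisj : Disjoint (Finset.Ioc 0 a) (Finset.Ioc a b) := by
    rw [Finset.disjoint_left]
    intro n h1 h2
    simp only [Finset.mem_Ioc] at h1 h2
    omega
  have h1 : ((Finset.Ioc 0 a).filter (d ∣ ·)).card + ((Finset.Ioc a b).filter (d ∣ ·)).card
      = ((Finset.Ioc 0 b).filter (d ∣ ·)).card := by
    rw [← Finset.card_union_of_disjoint (Finset.disjoint_filter_filter hdisj),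
      ← Finset.filter_union, hunion]
  rw [Nat.Ioc_filter_dvd_card_eq_div] at h1
  have h2 : ((Finset.Ioc a b).filter (d ∣ ·)).card + a / d = b / d := by
    rw [← Nat.Ioc_filter_dvd_card_eq_div b d, ← h1]; ring
  omega

lemma eight_mul_le_two_pow : ∀ m : ℕ, 6 ≤ m → 8 * m ≤ 2 ^ m := by
  intro m hm
  induction m with
  | zero => omega
  | succ m ih =>
    rcases Nat.lt_or_ge m 6 with h | h
    · interval_cases m <;> first | omega | norm_num
    · have := ih h
      have h2 : 8 ≤ 2 ^ m := le_trans (by omega) this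
      rw [pow_succ]
      omega

lemma log_two_ge_half : (1/2 : ℝ) ≤ Real.log 2 := by
  rw [Real.le_log_iff_exp_le (by norm_num : (0:ℝ) < 2)]
  have h2 : Real.exp (1/2) * Real.exp (1/2) = Real.exp 1 := by
    rw [← Real.exp_add]; norm_num
  have h3 := Real.exp_one_lt_d9
  nlinarith [Real.exp_pos (1/2 : ℝ)]

lemma log_hundred_ge : (3/2 : ℝ) ≤ Real.log 100 := by
  rw [Real.le_log_iff_exp_le (by norm_num : (0:ℝ) < 100)]
  have h2 : Real.exp (3/2) * Real.exp (3/2) = Real.exp 1 * Real.exp 1 * Real.exp 1 := by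
    rw [← Real.exp_add, ← Real.exp_add, ← Real.exp_add]; norm_num
  have h3 := Real.exp_one_lt_d9
  nlinarith [Real.exp_pos (3/2 : ℝ), Real.exp_pos (1:ℝ)]

theorem stmt_4 : ∃ c : ℝ, 0 < c ∧ ∀ᶠ x : ℝ in atTop,
    (countOf Aset (Real.log x / Real.log 2) : ℝ) * (countOf Bset x : ℝ) >
        c * x * Real.log x / Real.exp (3 * Real.sqrt (Real.log (Real.log x)) *
          Real.log (Real.log (Real.log x))) ∧
      c * x * Real.log x / Real.exp (3 * Real.sqrt (Real.log (Real.log x)) *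
        Real.log (Real.log (Real.log x))) > x := by
  classical
  obtain ⟨T0, hT0⟩ := eventually_atTop.1 dProd_le_eventually
  obtain ⟨T, hTT0, hT100⟩ : ∃ T, T0 ≤ T ∧ 100 ≤ T :=
    ⟨max T0 100, le_max_left _ _, le_max_right _ _⟩
  refine ⟨1/256, by norm_num, ?_⟩
  filter_upwards [eventually_ge_atTop ((8 * 2 ^ 2 ^ T ^ 2 + 1 : ℕ) : ℝ),
    eventually_ge_atTop (2 : ℝ),
    Real.tendsto_log_atTop.eventually_ge_atTop (2 : ℝ),
    (Real.tendsto_log_atTop.comp Real.tendsto_log_atTop).eventually_ge_atTop (331776 : ℝ)]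
    with x hx1 hx2 hlogx hu
  have hxpos : (0:ℝ) < x := by linarith only [hx2]
  set L := Real.log x with hLdef
  have hL2 : (2:ℝ) ≤ L := hlogx
  have hLpos : (0:ℝ) < L := by linarith only [hL2]
  set u := Real.log L with hudef
  have hu' : (331776:ℝ) ≤ u := hu
  have hupos : (0:ℝ) < u := by linarith only [hu']
  set E := Real.exp (3 * Real.sqrt u * Real.log u) with hEdef
  have hEpos : (0:ℝ) < E := Real.exp_pos _
  -- integer part
  obtain ⟨N, hNdef⟩ : ∃ N, N = ⌊x⌋₊ := ⟨_, rfl⟩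
  have hNx : (N:ℝ) ≤ x := by rw [hNdef]; exact Nat.floor_le hxpos.le
  have hxN : x < (N:ℝ) + 1 := by rw [hNdef]; exact Nat.lt_floor_add_one x
  have hKN : 8 * 2 ^ 2 ^ T ^ 2 + 1 ≤ N := by rw [hNdef]; exact Nat.le_floor hx1
  -- choice of t
  obtain ⟨t, htdef⟩ : ∃ t, t = Nat.findGreatest (fun s => 8 * 2 ^ 2 ^ s ^ 2 ≤ N) N := ⟨_, rfl⟩
  have hTN : T ≤ N := by
    have h1 : T < 2 ^ T := Nat.lt_two_pow_self
    have h2 : 2 ^ T ≤ 2 ^ 2 ^ T ^ 2 := by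
      apply Nat.pow_le_pow_right (by norm_num)
      calc T ≤ 2 ^ T := h1.le
        _ ≤ 2 ^ T ^ 2 := Nat.pow_le_pow_right (by norm_num) (Nat.le_self_pow (by norm_num) T)
    omega
  have hPT' : 8 * 2 ^ 2 ^ T ^ 2 ≤ N := by omega
  have htT : T ≤ t := by rw [htdef]; exact Nat.le_findGreatest hTN hPT'
  have ht100 : 100 ≤ t := le_trans hT100 htT
  have hPt : 8 * 2 ^ 2 ^ t ^ 2 ≤ N := by
    rw [htdef]
    exact Nat.findGreatest_spec (P := fun s => 8 * 2 ^ 2 ^ s ^ 2 ≤ N) hTN hPT'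
  have htN : t < N := by
    rcases Nat.lt_or_ge t N with h | h
    · exact h
    · exfalso
      have ht' : t ≤ N := by rw [htdef]; exact Nat.findGreatest_le N
      have hteq : t = N := le_antisymm ht' h
      have h1 : N < 2 ^ N := Nat.lt_two_pow_self
      have h2 : 2 ^ N ≤ 2 ^ 2 ^ N ^ 2 := by
        apply Nat.pow_le_pow_right (by norm_num)
        calc N ≤ 2 ^ N := h1.le
          _ ≤ 2 ^ N ^ 2 := Nat.pow_le_pow_right (by norm_num) (Nat.le_self_pow (by norm_num) N)
      rw [hteq] at hPt
      omega
  have hnotP : N < 8 * 2 ^ 2 ^ (t+1) ^ 2 := by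
    have hgr := Nat.findGreatest_is_greatest (P := fun s => 8 * 2 ^ 2 ^ s ^ 2 ≤ N) (n := N)
      (k := t + 1) (by omega) (by omega)
    simp only [not_le] at hgr
    exact hgr
  -- nat quantities
  obtain ⟨P2, hP2def⟩ : ∃ P2, P2 = 2 ^ 2 ^ t ^ 2 := ⟨_, rfl⟩
  obtain ⟨Q2, hQ2def⟩ : ∃ Q2, Q2 = 2 ^ 2 ^ (t+1) ^ 2 := ⟨_, rfl⟩
  obtain ⟨d, hddef⟩ : ∃ d, d = dProd t := ⟨_, rfl⟩
  rw [← hP2def] at hPt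
  rw [← hQ2def] at hnotP
  have hd1 : 1 ≤ d := by rw [hddef]; exact dProd_pos t
  have hdR : (0:ℝ) < (d:ℝ) := by exact_mod_cast hd1
  have hP2pos : 0 < P2 := by rw [hP2def]; positivity
  have hQ2pos : 0 < Q2 := by rw [hQ2def]; positivity
  have hPQsq : P2 ^ 2 ≤ Q2 := by
    rw [hP2def, hQ2def, ← pow_mul]
    apply Nat.pow_le_pow_right (by norm_num)
    calc 2 ^ t ^ 2 * 2 = 2 ^ (t ^ 2 + 1) := (pow_succ 2 (t^2)).symm
      _ ≤ 2 ^ (t+1) ^ 2 := Nat.pow_le_pow_right (by norm_num) (by nlinarith only [Nat.zero_le t])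
  have hP2Q2 : P2 < Q2 := by
    rw [hP2def, hQ2def]
    apply Nat.pow_lt_pow_right (by norm_num)
    apply Nat.pow_lt_pow_right (by norm_num)
    nlinarith only [Nat.zero_le t]
  obtain ⟨M, hMdef⟩ : ∃ M, M = min N (Q2 - 1) := ⟨_, rfl⟩
  have hPM : P2 ≤ M := by rw [hMdef]; exact le_min (by omega) (by omega)
  have hMN : M ≤ N := by rw [hMdef]; exact min_le_left _ _
  have hMQ : M ≤ Q2 - 1 := by rw [hMdef]; exact min_le_right _ _
  -- the finset of multiples of d in (P2, M]
  have hcardF : ((Finset.Ioc P2 M).filter (d ∣ ·)).card = M / d - P2 / d :=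
    card_dvd_Ioc d P2 M hPM
  have hmem : ∀ n ∈ (Finset.Ioc P2 M).filter (d ∣ ·), n ∈ Bset ∧ (n:ℝ) ≤ x := by
    intro n hn
    rw [Finset.mem_filter, Finset.mem_Ioc] at hn
    obtain ⟨⟨hn1, hn2⟩, hdvd⟩ := hn
    constructor
    · have hBt : n ∈ Bt t := by
        refine ⟨by rw [← hddef]; exact hdvd, by omega, by omega⟩
      exact Set.mem_biUnion (show t ∈ {s : ℕ | 1 ≤ s} from by
        simp only [Set.mem_setOf_eq]; omega) hBt
    · calc (n:ℝ) ≤ (N:ℝ) := by exact_mod_cast le_trans hn2 hMN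
        _ ≤ x := hNx
  have hcountB : ((M / d - P2 / d : ℕ) : ℝ) ≤ (countOf Bset x : ℝ) := by
    rw [← hcardF]
    exact_mod_cast countOf_ge Bset x _ hmem
  -- real estimates on the count
  have hdivM : ((M / d : ℕ) : ℝ) ≥ (M:ℝ)/(d:ℝ) - 1 := by
    have h1 := Nat.div_add_mod M d
    have h2 : M % d < d := Nat.mod_lt _ (by omega)
    have h3 : (M:ℝ) = (d:ℝ) * ((M/d : ℕ):ℝ) + ((M % d : ℕ):ℝ) := by exact_mod_cast h1.symm
    have h4 : ((M % d : ℕ):ℝ) < (d:ℝ) := by exact_mod_cast h2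
    rw [ge_iff_le, sub_le_iff_le_add, div_le_iff₀ hdR]
    nlinarith only [h3, h4]
  have hdivP : ((P2 / d : ℕ) : ℝ) ≤ (P2:ℝ)/(d:ℝ) := Nat.cast_div_le
  have hcast_sub : ((M / d - P2 / d : ℕ) : ℝ) ≥ (M:ℝ)/(d:ℝ) - 1 - (P2:ℝ)/(d:ℝ) := by
    have hle : P2 / d ≤ M / d := Nat.div_le_div_right hPM
    have he : ((M / d - P2 / d : ℕ) : ℝ) = ((M/d:ℕ):ℝ) - ((P2/d:ℕ):ℝ) := by
      rw [Nat.cast_sub hle]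
    rw [he]
    linarith only [hdivM, hdivP]
  have hNR8 : 8 * (P2:ℝ) ≤ (N:ℝ) := by exact_mod_cast hPt
  have hP2Rpos : (0:ℝ) < (P2:ℝ) := by exact_mod_cast hP2pos
  have hNRpos : (0:ℝ) < (N:ℝ) := by linarith only [hNR8, hP2Rpos]
  -- main lower bound for the count of B
  have hMlb : (M:ℝ)/(d:ℝ) - 1 - (P2:ℝ)/(d:ℝ) ≥ (N:ℝ)/(16*(d:ℝ)) - 2 := by
    have hdd : (0:ℝ) < 16*(d:ℝ) := by positivity
    rcases le_or_gt N (Q2 - 1) with hc | hc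
    · have hMeq : M = N := by rw [hMdef]; exact min_eq_left hc
      rw [hMeq]
      have h1 : (P2:ℝ)/(d:ℝ) ≤ ((N:ℝ)/8)/(d:ℝ) :=
        div_le_div_of_nonneg_right (by linarith only [hNR8]) hdR.le
      have e2 : (N:ℝ)/(16*(d:ℝ)) = ((N:ℝ)/16)/(d:ℝ) := (div_div (N:ℝ) 16 (d:ℝ)).symm
      have e3 : ((N:ℝ)/16)/(d:ℝ) ≤ ((N:ℝ) - (N:ℝ)/8)/(d:ℝ) :=
        div_le_div_of_nonneg_right (by linarith only [hNRpos]) hdR.le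
      have e4 : ((N:ℝ) - (N:ℝ)/8)/(d:ℝ) = (N:ℝ)/(d:ℝ) - ((N:ℝ)/8)/(d:ℝ) := sub_div _ _ _
      rw [e2]
      linarith only [h1, e3, e4]
    · have hQ2N : Q2 ≤ N := by omega
      have hMeq : M = Q2 - 1 := by rw [hMdef]; exact min_eq_right (by omega)
      have hMr : (M:ℝ) = (Q2:ℝ) - 1 := by
        rw [hMeq]; push_cast [Nat.cast_sub (by omega : 1 ≤ Q2)]; ring
      have hN8Q : (N:ℝ) < 8*(Q2:ℝ) := by exact_mod_cast hnotP
      have hP16 : 16 ≤ P2 := by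
        rw [hP2def]
        calc (16:ℕ) = 2 ^ 4 := by norm_num
          _ ≤ 2 ^ 2 ^ t ^ 2 := by
            apply Nat.pow_le_pow_right (by norm_num)
            calc (4:ℕ) = 2^2 := by norm_num
              _ ≤ 2 ^ t ^ 2 := Nat.pow_le_pow_right (by norm_num) (by nlinarith only [ht100])
      have h16P2 : 16 * P2 ≤ N := by
        calc 16 * P2 ≤ P2 * P2 := Nat.mul_le_mul_right _ hP16
          _ = P2 ^ 2 := (sq P2).symm
          _ ≤ Q2 := hPQsq
          _ ≤ N := hQ2N
      have hP2N16 : (P2:ℝ) ≤ (N:ℝ)/16 := by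
        rw [le_div_iff₀ (by norm_num : (0:ℝ) < 16)]
        have : ((16 * P2 : ℕ):ℝ) ≤ (N:ℝ) := by exact_mod_cast h16P2
        push_cast at this
        linarith only [this]
      have hMge : (N:ℝ)/8 - 1 ≤ (M:ℝ) := by
        rw [hMr]
        have : (N:ℝ)/8 < (Q2:ℝ) := by linarith only [hN8Q]
        linarith only [this]
      have h1 : ((N:ℝ)/8 - 1)/(d:ℝ) ≤ (M:ℝ)/(d:ℝ) :=
        div_le_div_of_nonneg_right hMge hdR.le
      have h2 : (P2:ℝ)/(d:ℝ) ≤ ((N:ℝ)/16)/(d:ℝ) :=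
        div_le_div_of_nonneg_right hP2N16 hdR.le
      have e1 : ((N:ℝ)/8 - 1)/(d:ℝ) = ((N:ℝ)/8)/(d:ℝ) - 1/(d:ℝ) := sub_div _ _ _
      have e2 : ((N:ℝ)/8)/(d:ℝ) - ((N:ℝ)/16)/(d:ℝ) = ((N:ℝ)/8 - (N:ℝ)/16)/(d:ℝ) :=
        (sub_div _ _ _).symm
      have e3 : ((N:ℝ)/8 - (N:ℝ)/16)/(d:ℝ) = ((N:ℝ)/16)/(d:ℝ) := by
        rw [show (N:ℝ)/8 - (N:ℝ)/16 = (N:ℝ)/16 by ring]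
      have e4 : (N:ℝ)/(16*(d:ℝ)) = ((N:ℝ)/16)/(d:ℝ) := (div_div (N:ℝ) 16 (d:ℝ)).symm
      have e5 : 1/(d:ℝ) ≤ 1 := by
        rw [div_le_one hdR]; exact_mod_cast hd1
      rw [e4]
      linarith only [h1, h2, e1, e2, e3, e5]
  -- lower bound for countOf Bset x
  have hcountB2 : (N:ℝ)/(16*(d:ℝ)) - 2 ≤ (countOf Bset x : ℝ) := by
    linarith only [hMlb, hcast_sub, hcountB]
  -- dProd bound and size bounds
  have hd_exp : (d:ℝ) ≤ Real.exp (3 * t * Real.log t) := by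
    rw [hddef]; exact hT0 t (le_trans hTT0 htT)
  have htR : (100:ℝ) ≤ (t:ℝ) := by exact_mod_cast ht100
  have htRpos : (0:ℝ) < (t:ℝ) := by linarith only [htR]
  have hlogt32 : (3/2:ℝ) ≤ Real.log t :=
    le_trans log_hundred_ge (Real.log_le_log (by norm_num) htR)
  have hlogtpos : (0:ℝ) < Real.log t := by linarith only [hlogt32]
  have hlogt_le : Real.log t ≤ (t:ℝ) := by
    have h := Real.log_le_sub_one_of_pos htRpos; linarith only [h]
  have hP2R : 16 * Real.exp (3 * t * Real.log t) ≤ (P2:ℝ) := by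
    have ht6 : 6 ≤ t ^ 2 := by
      calc 6 ≤ 100 := by norm_num
        _ ≤ t := ht100
        _ ≤ t ^ 2 := Nat.le_self_pow (by norm_num) t
    have hm : (8 * t^2 : ℕ) ≤ 2 ^ t ^ 2 := eight_mul_le_two_pow (t^2) ht6
    have hmR : 8 * (t:ℝ)^2 ≤ ((2 ^ t ^ 2 : ℕ) : ℝ) := by exact_mod_cast hm
    have hlog16 : Real.log 16 ≤ 15 := by
      have h := Real.log_le_sub_one_of_pos (by norm_num : (0:ℝ) < 16); linarith only [h]
    have hkey : 3 * (t:ℝ) * Real.log t + Real.log 16 ≤ ((2 ^ t ^ 2 : ℕ) : ℝ) * Real.log 2 := by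
      have ht2 : (10000:ℝ) ≤ (t:ℝ)^2 := by nlinarith only [htR]
      have c1' := mul_le_mul_of_nonneg_left hlogt_le (by positivity : (0:ℝ) ≤ 3*(t:ℝ))
      have c1 : 3 * (t:ℝ) * Real.log t ≤ 3 * (t:ℝ)^2 := by nlinarith only [c1']
      have c2 : ((2 ^ t ^ 2 : ℕ) : ℝ) * Real.log 2 ≥ (8 * (t:ℝ)^2) * (1/2) := by
        apply mul_le_mul hmR log_two_ge_half (by norm_num)
        positivity
      linarith only [c1, c2, hlog16, ht2]
    have hP2val : (P2:ℝ) = Real.exp (((2 ^ t ^ 2 : ℕ) : ℝ) * Real.log 2) := by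
      rw [hP2def]
      rw [show ((2 ^ 2 ^ t ^ 2 : ℕ) : ℝ) = (2:ℝ) ^ (2 ^ t ^ 2 : ℕ) from by
        rw [Nat.cast_pow]; norm_num]
      rw [← Real.log_pow, Real.exp_log (by positivity)]
    rw [hP2val]
    calc 16 * Real.exp (3 * t * Real.log t)
        = Real.exp (3 * t * Real.log t + Real.log 16) := by
          rw [Real.exp_add, Real.exp_log (by norm_num : (0:ℝ) < 16)]; ring
      _ ≤ Real.exp (((2 ^ t ^ 2 : ℕ) : ℝ) * Real.log 2) := Real.exp_le_exp.2 hkey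
  have hx128 : 128 * (d:ℝ) ≤ x := by
    linarith only [hd_exp, hP2R, hNR8, hNx]
  -- lower bound for countOf Bset x against x
  have hBx : x/(64*(d:ℝ)) ≤ (countOf Bset x : ℝ) := by
    have hdne : (16*(d:ℝ)) ≠ 0 := by positivity
    have q1 : (N:ℝ)/(16*(d:ℝ)) - 2 = ((N:ℝ) - 32*(d:ℝ))/(16*(d:ℝ)) := by
      field_simp
      ring
    have q2 : x/(64*(d:ℝ)) = (x/4)/(16*(d:ℝ)) := by ring
    have q3 : x/4 ≤ (N:ℝ) - 32*(d:ℝ) := by linarith only [hxN, hx128, hx2]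
    have q4 : (x/4)/(16*(d:ℝ)) ≤ ((N:ℝ) - 32*(d:ℝ))/(16*(d:ℝ)) :=
      div_le_div_of_nonneg_right q3 (by positivity)
    rw [q2]
    rw [q1] at hcountB2
    linarith only [q4, hcountB2]
  -- lower bound for countOf Aset
  have hlog2pos : (0:ℝ) < Real.log 2 := Real.log_pos (by norm_num)
  have hlog2le1 : Real.log 2 ≤ 1 := by
    have h := Real.log_le_sub_one_of_pos (by norm_num : (0:ℝ) < 2); linarith only [h]
  have hyL : L ≤ L / Real.log 2 := by
    have hm := mul_le_mul_of_nonneg_left hlog2le1 hLpos.le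
    rw [le_div_iff₀ hlog2pos]
    linarith only [hm]
  have hypos : (0:ℝ) ≤ L / Real.log 2 := by positivity
  have hA : L/2 ≤ (countOf Aset (L / Real.log 2) : ℝ) := by
    have hmemA : ∀ n ∈ Finset.Icc 1 ⌊L / Real.log 2⌋₊, n ∈ Aset ∧ (n:ℝ) ≤ L / Real.log 2 := by
      intro n hn
      rw [Finset.mem_Icc] at hn
      refine ⟨hn.1, ?_⟩
      calc (n:ℝ) ≤ (⌊L / Real.log 2⌋₊ : ℝ) := by exact_mod_cast hn.2
        _ ≤ L / Real.log 2 := Nat.floor_le hypos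
    have hcA := countOf_ge Aset (L / Real.log 2) _ hmemA
    rw [Nat.card_Icc] at hcA
    have hfl : (⌊L / Real.log 2⌋₊ : ℝ) ≥ L / Real.log 2 - 1 := (Nat.sub_one_lt_floor _).le
    have : ((⌊L / Real.log 2⌋₊ + 1 - 1 : ℕ) : ℝ) ≤ (countOf Aset (L / Real.log 2) : ℝ) := by
      exact_mod_cast hcA
    simp only [Nat.add_sub_cancel] at this
    linarith only [this, hfl, hyL, hL2]
  -- bounds relating u and t
  have hu_t : ((t:ℝ)^2 - 1) * Real.log 2 ≤ u := by
    have hP2x : (P2:ℝ) ≤ x := by linarith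
    have hcastP2 : ((2 ^ 2 ^ t ^ 2 : ℕ) : ℝ) = (2:ℝ) ^ (2 ^ t ^ 2 : ℕ) := by
      rw [Nat.cast_pow]; norm_num
    have h1 : (2:ℝ) ^ (2 ^ t ^ 2 : ℕ) ≤ x := by
      rw [← hcastP2, ← hP2def]; exact hP2x
    have hLlb : ((2 ^ t ^ 2 : ℕ) : ℝ) * Real.log 2 ≤ L := by
      calc ((2 ^ t ^ 2 : ℕ) : ℝ) * Real.log 2
          = Real.log ((2:ℝ) ^ (2 ^ t ^ 2 : ℕ)) := (Real.log_pow _ _).symm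
        _ ≤ L := by rw [hLdef]; exact Real.log_le_log (by positivity) h1
    have hmpos : (0:ℝ) < ((2 ^ t ^ 2 : ℕ) : ℝ) := by
      have : (0:ℕ) < 2 ^ t ^ 2 := by positivity
      exact_mod_cast this
    have hm2 : ((2 ^ t ^ 2 : ℕ) : ℝ)/2 ≤ L := by
      have : ((2 ^ t ^ 2 : ℕ) : ℝ) * (1/2) ≤ ((2 ^ t ^ 2 : ℕ) : ℝ) * Real.log 2 :=
        mul_le_mul_of_nonneg_left log_two_ge_half hmpos.le
      linarith only [this, hLlb]
    have hmlog : Real.log (((2 ^ t ^ 2 : ℕ) : ℝ)/2) ≤ u := by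
      rw [hudef]
      exact Real.log_le_log (by positivity) hm2
    have hlogm : Real.log (((2 ^ t ^ 2 : ℕ) : ℝ)/2)
        = ((t ^ 2 : ℕ) : ℝ) * Real.log 2 - Real.log 2 := by
      rw [Real.log_div hmpos.ne' (by norm_num)]
      congr 1
      rw [show ((2 ^ t ^ 2 : ℕ) : ℝ) = (2:ℝ) ^ (t ^ 2 : ℕ) from by rw [Nat.cast_pow]; norm_num]
      exact Real.log_pow _ _
    rw [hlogm] at hmlog
    have : ((t ^ 2 : ℕ) : ℝ) = (t:ℝ)^2 := by push_cast; ring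
    rw [this] at hmlog
    nlinarith only [hmlog]
  have hu_t2 : (16/25)*(t:ℝ)^2 ≤ u := by
    have hl2 := Real.log_two_gt_d9
    have ht2 : (10000:ℝ) ≤ (t:ℝ)^2 := by nlinarith only [htR]
    have hp0 : (0:ℝ) ≤ (t:ℝ)^2 - 1 := by linarith only [ht2]
    have hp1 := mul_le_mul_of_nonneg_left hl2.le hp0
    have hp2 : (16/25)*(t:ℝ)^2 ≤ ((t:ℝ)^2 - 1) * 0.6931471803 := by
      nlinarith only [ht2]
    calc (16/25)*(t:ℝ)^2 ≤ ((t:ℝ)^2 - 1) * 0.6931471803 := hp2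
      _ ≤ ((t:ℝ)^2 - 1) * Real.log 2 := hp1
      _ ≤ u := hu_t
  have hsqrtu : (4/5)*(t:ℝ) ≤ Real.sqrt u := by
    rw [Real.le_sqrt' (by linarith only [htRpos])]
    nlinarith only [hu_t2]
  have hlogu_lb : (8/5)*Real.log t ≤ Real.log u := by
    have h1 : Real.log ((16/25)*(t:ℝ)^2) ≤ Real.log u :=
      Real.log_le_log (by positivity) hu_t2
    have h2 : Real.log ((16/25)*(t:ℝ)^2) = Real.log (16/25 : ℝ) + 2*Real.log t := by
      rw [Real.log_mul (by norm_num) (by positivity)]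
      congr 1
      rw [show ((t:ℝ)^2) = (t:ℝ)^(2:ℕ) from by norm_num]
      rw [Real.log_pow]
      norm_num
    have h3 : Real.log (16/25 : ℝ) = - Real.log (25/16 : ℝ) := by
      rw [show (16/25:ℝ) = (25/16:ℝ)⁻¹ by norm_num, Real.log_inv]
    have h4 : Real.log (25/16 : ℝ) ≤ 9/16 := by
      have h := Real.log_le_sub_one_of_pos (by norm_num : (0:ℝ) < 25/16); linarith only [h]
    linarith only [h1, h2, h3, h4, hlogt32]
  have hE_lb : Real.exp (3 * t * Real.log t + 1) ≤ E := by
    rw [hEdef]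
    apply Real.exp_le_exp.2
    have hm := mul_le_mul hsqrtu hlogu_lb (by positivity) (Real.sqrt_nonneg u)
    have htlogt : (150:ℝ) ≤ (t:ℝ) * Real.log t := by
      calc (150:ℝ) = 100 * (3/2) := by norm_num
        _ ≤ (t:ℝ) * Real.log t := mul_le_mul htR hlogt32 (by norm_num) (by linarith only [htR])
    nlinarith only [hm, htlogt]
  have hEd : 2*(d:ℝ) < E := by
    have h1 : Real.exp (3*(t:ℝ)*Real.log t + 1) = Real.exp (3*(t:ℝ)*Real.log t) * Real.exp 1 :=
      Real.exp_add _ 1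
    have h2 := Real.exp_one_gt_d9
    have h3 := Real.exp_pos (3*(t:ℝ)*Real.log t)
    nlinarith only [hd_exp, hE_lb, h1, h2, h3]
  constructor
  · -- part (i)
    have hcA0 : (0:ℝ) ≤ (countOf Aset (L / Real.log 2) : ℝ) := by positivity
    have hprod : (L/2) * (x/(64*(d:ℝ)))
        ≤ (countOf Aset (L / Real.log 2) : ℝ) * (countOf Bset x : ℝ) :=
      mul_le_mul hA hBx (by positivity) hcA0
    have hgoal : 1/256 * x * L / E < (L/2) * (x/(64*(d:ℝ))) := by
      have he : (L/2) * (x/(64*(d:ℝ))) = (x*L)/(128*(d:ℝ)) := by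
        field_simp
        ring
      have hxL : (0:ℝ) < x*L := by positivity
      rw [he, div_lt_div_iff₀ hEpos (by positivity : (0:ℝ) < 128*(d:ℝ))]
      nlinarith only [hEd, hdR, hxL]
    linarith only [hprod, hgoal]
  · -- part (ii)
    have h1 : 3 * Real.sqrt u * Real.log u ≤ u/2 := by
      have hspos : (0:ℝ) < Real.sqrt u := Real.sqrt_pos.2 hupos
      have hrpos : (0:ℝ) < Real.sqrt (Real.sqrt u) := Real.sqrt_pos.2 hspos
      have hs2 : Real.sqrt u * Real.sqrt u = u := Real.mul_self_sqrt hupos.le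
      have hr2 : Real.sqrt (Real.sqrt u) * Real.sqrt (Real.sqrt u) = Real.sqrt u :=
        Real.mul_self_sqrt hspos.le
      have hs576 : (576:ℝ) ≤ Real.sqrt u := by
        rw [Real.le_sqrt' (by norm_num)]
        nlinarith only [hu']
      have hr24 : (24:ℝ) ≤ Real.sqrt (Real.sqrt u) := by
        rw [Real.le_sqrt' (by norm_num)]
        nlinarith only [hs576]
      have hlu : Real.log u = 2 * Real.log (Real.sqrt u) := by
        rw [Real.log_sqrt hupos.le]; ring
      have hls : Real.log (Real.sqrt u) = 2 * Real.log (Real.sqrt (Real.sqrt u)) := by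
        rw [Real.log_sqrt hspos.le]; ring
      have hlr : Real.log (Real.sqrt (Real.sqrt u)) ≤ Real.sqrt (Real.sqrt u) := by
        have h := Real.log_le_sub_one_of_pos hrpos; linarith only [h]
      have key : 24 * Real.sqrt (Real.sqrt u) ≤ Real.sqrt u := by
        nlinarith only [hr24, hr2, hrpos.le]
      rw [hlu, hls]
      have p1 := mul_le_mul_of_nonneg_left hlr hspos.le
      have p2 : 24 * (Real.sqrt u * Real.sqrt (Real.sqrt u)) ≤ Real.sqrt u * Real.sqrt u := by
        nlinarith only [key, hspos.le]
      nlinarith only [p1, p2, hs2]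
    have hEu : E ≤ Real.exp (u/2) := by
      rw [hEdef]; exact Real.exp_le_exp.2 h1
    have hbig : (256:ℝ) < Real.exp (u/2) := by
      linarith only [Real.add_one_le_exp (u/2), hu']
    have hLexp : Real.exp (u/2) * Real.exp (u/2) = L := by
      rw [← Real.exp_add, show u/2+u/2 = u by ring, hudef]
      exact Real.exp_log hLpos
    have hL256E : 256 * E < L := by
      nlinarith only [Real.exp_pos (u/2), hEpos, hEu, hbig, hLexp]
    rw [gt_iff_lt, lt_div_iff₀ hEpos]
    nlinarith only [hxpos, hL256E, hEpos]
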